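/- Let e ≥ 2, r ≥ 1 and M = (M_0,...,M_{e-1}) ∈ ℤ^e. For r-tuples of abacus configurations (λ, s), (μ, s'), one has (λ, s) ≈_e (μ, s') if and only if Str((λ, s); M) ≈_e Str((μ, s'); M); that is, the stretching operation preserves blocks. -/

import Mathlib

/-- A partition: a weakly decreasing sequence of non-negative integers,
eventually zero.  `part i` is the `(i+1)`-st part `λ_{i+1}`. -/
structure PartitionSeq where
  part : ℕ → ℕ
  antitone : ∀ i j : ℕ, i ≤ j → part j ≤ part i
  eventually_zero : ∃ N : ℕ, ∀ i : ℕ, N ≤ i → part i = 0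

/-- The empty partition. -/
def zeroPart : PartitionSeq := ⟨fun _ => 0, fun _ _ _ => le_rfl, ⟨0, fun _ _ => rfl⟩⟩

/-- A β-set: a set of integers containing all sufficiently small integers and
excluding all sufficiently large ones. -/
def IsBetaSet (B : Set ℤ) : Prop :=
  (∃ N : ℤ, ∀ z : ℤ, z < N → z ∈ B) ∧ (∃ M : ℤ, ∀ z : ℤ, M < z → z ∉ B)

/-- The β-set `B_s(λ) = {λ_i - i + s : i ≥ 1}`. -/
def betaSet (lam : PartitionSeq) (s : ℤ) : Set ℤ :=
  {b : ℤ | ∃ i : ℕ, b = (lam.part i : ℤ) - ((i : ℤ) + 1) + s}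

/-- `|λ|`, the sum of the parts of a partition. -/
noncomputable def psize (lam : PartitionSeq) : ℕ := ∑ᶠ i, lam.part i

/-- The pair `(λ, s)` corresponding to a β-set (junk value if none exists). -/
noncomputable def partOfBeta (B : Set ℤ) : PartitionSeq × ℤ :=
  letI := Classical.propDecidable (∃ p : PartitionSeq × ℤ, betaSet p.1 p.2 = B)
  if h : ∃ p : PartitionSeq × ℤ, betaSet p.1 p.2 = B then h.choose else (zeroPart, 0)

/-- The β-set `C_i` of runner `i`: the rows `m` with a bead at position `m*e+i`. -/
def quotSetB (e : ℕ) (B : Set ℤ) (i : ℕ) : Set ℤ :=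
  {m : ℤ | m * (e : ℤ) + (i : ℤ) ∈ B}

/-- `ρ_i`: the `i`-th component of the `e`-quotient of the configuration `B`. -/
noncomputable def rhoB (e : ℕ) (B : Set ℤ) (i : ℕ) : PartitionSeq :=
  (partOfBeta (quotSetB e B i)).1

/-- `t_i`: the charge of runner `i` of the configuration `B`. -/
noncomputable def tB (e : ℕ) (B : Set ℤ) (i : ℕ) : ℤ :=
  (partOfBeta (quotSetB e B i)).2

/-- `|ρ| = Σ_i |ρ_i|`, the size of the `e`-quotient of `B`. -/
noncomputable def wtB (e : ℕ) (B : Set ℤ) : ℕ :=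
  ∑ i ∈ Finset.range e, psize (rhoB e B i)

/-- `B` is a (`c`-shifted) Rouquier configuration: `wt ≤ t_{i+1} - t_i + c`
for all `0 ≤ i < e-1`.  `c = 1` gives Rouquier, `c = r` gives `r`-Rouquier. -/
def IsRouquierB (e : ℕ) (B : Set ℤ) (c : ℤ) : Prop :=
  ∀ i : ℕ, i + 1 < e → (wtB e B : ℤ) ≤ tB e B (i + 1) - tB e B i + c

/-- Uglov's map `ψ_k`: sends `me + i` (with `0 ≤ i < e`) to `((m+1)r - k)e + i`. -/
def psi (e r k x : ℤ) : ℤ := ((Int.ediv x e + 1) * r - k) * e + Int.emod x e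

/-- Uglov's map `Ψ_r` on β-sets: `⨆_{k=1}^r ψ_k(B_k)`. -/
def uglovSet (e r : ℕ) (B : Fin r → Set ℤ) : Set ℤ :=
  ⋃ k : Fin r, psi (e : ℤ) (r : ℤ) (((k : ℕ) : ℤ) + 1) '' B k

/-- The number of nodes of the Young diagram of `λ` with `e`-residue `j`
(for charge `0`). -/
noncomputable def resCount (e : ℕ) (lam : PartitionSeq) (j : ZMod e) : ℕ :=
  {p : ℕ × ℕ | p.2 < lam.part p.1 ∧ ((p.2 : ZMod e) - (p.1 : ZMod e) = j)}.ncard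

/-- The block relation `λ ∼_e μ` for partitions: equal size and equal
multisets of `e`-residues. -/
def SimE (e : ℕ) (lam mu : PartitionSeq) : Prop :=
  psize lam = psize mu ∧ ∀ j : ZMod e, resCount e lam j = resCount e mu j

/-- The number of nodes of the Young diagram of a multipartition with
`e`-residue `j`, for the multicharge `s`. -/
noncomputable def mresCount (e : ℕ) {r : ℕ} (lam : Fin r → PartitionSeq)
    (s : Fin r → ℤ) (j : ZMod e) : ℕ :=
  ∑ k : Fin r, {p : ℕ × ℕ |
    p.2 < (lam k).part p.1 ∧ ((s k : ZMod e) + (p.2 : ZMod e) - (p.1 : ZMod e) = j)}.ncard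

/-- The block relation `(λ, s) ≈_e (μ, s)` for multipartitions with the same
multicharge: equal size and equal multisets of `e`-residues. -/
def MSimE (e : ℕ) {r : ℕ} (lam mu : Fin r → PartitionSeq) (s : Fin r → ℤ) : Prop :=
  (∑ k, psize (lam k)) = (∑ k, psize (mu k)) ∧
    ∀ j : ZMod e, mresCount e lam s j = mresCount e mu s j

/-- The `e`-core abacus configuration of `B`: all beads pushed up on their
runners. -/
noncomputable def eCoreSet (e : ℕ) (B : Set ℤ) : Set ℤ :=
  {b : ℤ | ∃ i : ℕ, i < e ∧ ∃ m : ℤ, m < tB e B i ∧ b = m * (e : ℤ) + (i : ℤ)}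

/-- The `e`-core of `λ` (computed via the abacus with charge `s`). -/
noncomputable def eCore (e : ℕ) (lam : PartitionSeq) (s : ℤ) : PartitionSeq :=
  (partOfBeta (eCoreSet e (betaSet lam s))).1

/-- The `e`-weight of `λ`: `(|λ| - |e-core(λ)|)/e`. -/
noncomputable def eWeight (e : ℕ) (lam : PartitionSeq) (s : ℤ) : ℤ :=
  ((psize lam : ℤ) - (psize (eCore e lam s) : ℤ)) / (e : ℤ)

/-- Replace the bead at position `b` by a bead at position `c`. -/
def replaceBead (S : Set ℤ) (b c : ℤ) : Set ℤ := insert c (S \ {b})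

/-- Perform two bead replacements, `b₁ ↦ c₁` in component `k₁` and then
`b₂ ↦ c₂` in component `k₂`. -/
def twoBeadUpdate {ι : Type*} [DecidableEq ι] (B : ι → Set ℤ)
    (k₁ : ι) (b₁ c₁ : ℤ) (k₂ : ι) (b₂ c₂ : ℤ) : ι → Set ℤ :=
  Function.update (Function.update B k₁ (replaceBead (B k₁) b₁ c₁)) k₂
    (replaceBead (Function.update B k₁ (replaceBead (B k₁) b₁ c₁) k₂) b₂ c₂)

/-- Type-1 move at level `N`: decrease a β-number by `N` in component `k₁`
and increase a β-number by `N` in component `k₂`. -/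
def Move1 {ι : Type*} [DecidableEq ι] (N : ℤ) (B B' : ι → Set ℤ) : Prop :=
  ∃ k₁ k₂ : ι, ∃ b₁ b₂ : ℤ,
    b₁ ∈ B k₁ ∧ b₁ - N ∉ B k₁ ∧ b₂ ∈ B k₂ ∧ b₂ + N ∉ B k₂ ∧
    B' = twoBeadUpdate B k₁ b₁ (b₁ - N) k₂ b₂ (b₂ + N)

/-- Type-2 move at level `N`: for `b₁ ≡ b₂ (mod N)` and `h > 0`, replace `b₁`
by `b₁ + h` in component `k₁` and `b₂ + h` by `b₂` in component `k₂`. -/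
def Move2 {ι : Type*} [DecidableEq ι] (N : ℤ) (B B' : ι → Set ℤ) : Prop :=
  ∃ k₁ k₂ : ι, ∃ b₁ b₂ h : ℤ, 0 < h ∧ ((N : ℤ) ∣ b₁ - b₂) ∧
    b₁ ∈ B k₁ ∧ b₁ + h ∉ B k₁ ∧ b₂ ∉ B k₂ ∧ b₂ + h ∈ B k₂ ∧
    B' = twoBeadUpdate B k₁ b₁ (b₁ + h) k₂ (b₂ + h) b₂

/-- The block relation on tuples of abacus configurations: the reflexive
transitive closure of type-1 and type-2 moves at level `N`. -/
def BlockEq {ι : Type*} [DecidableEq ι] (N : ℤ) (B B' : ι → Set ℤ) : Prop :=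
  Relation.ReflTransGen (fun X Y => Move1 N X Y ∨ Move2 N X Y) B B'

/-- The stretching operation on a single abacus configuration: shift the
content of runner `i` by `M i`, leaving the `e`-quotient unchanged. -/
def strSet (e : ℕ) (M : ℕ → ℤ) (B : Set ℤ) : Set ℤ :=
  {b : ℤ | ∃ i : ℕ, i < e ∧ ∃ m : ℤ, m * (e : ℤ) + (i : ℤ) ∈ B ∧
    b = (m + M i) * (e : ℤ) + (i : ℤ)}

section StretchAux

variable {ι : Type*} [DecidableEq ι]

/-- The shift map realizing `strSet` as an image. -/
def strFun (e : ℕ) (M : ℕ → ℤ) (b : ℤ) : ℤ := b + (e : ℤ) * M (b % (e : ℤ)).toNat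

lemma strFun_emod (e : ℕ) (M : ℕ → ℤ) (b : ℤ) :
    strFun e M b % (e : ℤ) = b % (e : ℤ) := by
  unfold strFun; rw [Int.add_mul_emod_self_left]

lemma strFun_injective (e : ℕ) (M : ℕ → ℤ) : Function.Injective (strFun e M) := by
  intro a b hab
  have hmod : a % (e : ℤ) = b % (e : ℤ) := by
    rw [← strFun_emod e M a, ← strFun_emod e M b, hab]
  unfold strFun at hab
  rw [hmod] at hab
  exact add_right_cancel hab

lemma strFun_add (e : ℕ) (M : ℕ → ℤ) (b N : ℤ) (hN : (e : ℤ) ∣ N) :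
    strFun e M (b + N) = strFun e M b + N := by
  obtain ⟨t, rfl⟩ := hN
  unfold strFun
  rw [Int.add_mul_emod_self_left]
  ring

lemma strFun_sub_strFun (e : ℕ) (M : ℕ → ℤ) (a b : ℤ) (h : (e : ℤ) ∣ a - b) :
    strFun e M a = strFun e M b + (a - b) := by
  have := strFun_add e M b (a - b) h
  rwa [add_sub_cancel] at this

lemma strSet_eq_image (e : ℕ) (he : 0 < e) (M : ℕ → ℤ) (B : Set ℤ) :
    strSet e M B = strFun e M '' B := by
  have he' : (0 : ℤ) < (e : ℤ) := by exact_mod_cast he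
  ext b
  constructor
  · rintro ⟨i, hi, m, hm, rfl⟩
    refine ⟨m * (e : ℤ) + (i : ℤ), hm, ?_⟩
    have hmod : (m * (e : ℤ) + (i : ℤ)) % (e : ℤ) = (i : ℤ) := by
      rw [add_comm, Int.add_mul_emod_self_right]
      exact Int.emod_eq_of_lt (by positivity) (by exact_mod_cast hi)
    unfold strFun
    rw [hmod, Int.toNat_natCast]
    ring
  · rintro ⟨x, hx, rfl⟩
    refine ⟨(x % (e : ℤ)).toNat, ?_, x / (e : ℤ), ?_, ?_⟩
    · have := Int.emod_lt_of_pos x he'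
      omega
    · have h0 : (0 : ℤ) ≤ x % (e : ℤ) := Int.emod_nonneg x (by omega)
      rw [Int.toNat_of_nonneg h0, mul_comm]
      rw [Int.mul_ediv_add_emod]
      exact hx
    · have h0 : (0 : ℤ) ≤ x % (e : ℤ) := Int.emod_nonneg x (by omega)
      unfold strFun
      rw [Int.toNat_of_nonneg h0]
      have hx2 : (e : ℤ) * (x / (e : ℤ)) + x % (e : ℤ) = x := Int.mul_ediv_add_emod x _
      linear_combination -hx2

lemma strFun_inv (e : ℕ) (M : ℕ → ℤ) (b : ℤ) :
    strFun e (fun i => -M i) (strFun e M b) = b := by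
  unfold strFun
  simp only [Int.add_mul_emod_self_left]
  ring

lemma image_replaceBead {f : ℤ → ℤ} (hf : Function.Injective f) (S : Set ℤ) (b c : ℤ) :
    f '' replaceBead S b c = replaceBead (f '' S) (f b) (f c) := by
  unfold replaceBead
  rw [Set.image_insert_eq, Set.image_diff hf, Set.image_singleton]

lemma image_update (f : ℤ → ℤ) (B : ι → Set ℤ) (j : ι) (T : Set ℤ) :
    (fun k => f '' Function.update B j T k) = Function.update (fun k => f '' B k) j (f '' T) := by
  funext k
  rw [Function.update_apply, Function.update_apply, apply_ite (Set.image f)]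

lemma image_twoBeadUpdate {f : ℤ → ℤ} (hf : Function.Injective f)
    (B : ι → Set ℤ) (k₁ : ι) (b₁ c₁ : ℤ) (k₂ : ι) (b₂ c₂ : ℤ) :
    (fun k => f '' twoBeadUpdate B k₁ b₁ c₁ k₂ b₂ c₂ k) =
      twoBeadUpdate (fun k => f '' B k) k₁ (f b₁) (f c₁) k₂ (f b₂) (f c₂) := by
  unfold twoBeadUpdate
  rw [image_update]
  rw [image_replaceBead hf]
  have h1 : (fun k => f '' Function.update B k₁ (replaceBead (B k₁) b₁ c₁) k) =
      Function.update (fun k => f '' B k) k₁ (replaceBead ((fun k => f '' B k) k₁) (f b₁) (f c₁)) := by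
    rw [image_update, image_replaceBead hf]
  have h2 : f '' Function.update B k₁ (replaceBead (B k₁) b₁ c₁) k₂ =
      Function.update (fun k => f '' B k) k₁
        (replaceBead ((fun k => f '' B k) k₁) (f b₁) (f c₁)) k₂ := by
    exact congrFun h1 k₂
  rw [h2, h1]

lemma replaceBead_comm (S : Set ℤ) (b₁ c₁ b₂ c₂ : ℤ) (h1 : c₁ ≠ b₂) (h2 : c₂ ≠ b₁) :
    replaceBead (replaceBead S b₁ c₁) b₂ c₂ = replaceBead (replaceBead S b₂ c₂) b₁ c₁ := by
  unfold replaceBead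
  rw [Set.insert_diff_of_notMem _ (by simp [h1]), Set.insert_diff_of_notMem _ (by simp [h2]),
    Set.diff_diff, Set.diff_diff, Set.insert_comm]
  congr 2
  simp [Set.union_comm]

lemma twoBeadUpdate_comm (B : ι → Set ℤ) (k₁ k₂ : ι) (b₁ c₁ b₂ c₂ : ℤ)
    (h1 : k₁ = k₂ → c₁ ≠ b₂) (h2 : k₁ = k₂ → c₂ ≠ b₁) :
    twoBeadUpdate B k₁ b₁ c₁ k₂ b₂ c₂ = twoBeadUpdate B k₂ b₂ c₂ k₁ b₁ c₁ := by
  unfold twoBeadUpdate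
  by_cases hk : k₁ = k₂
  · subst hk
    funext k
    by_cases h : k = k₁
    · subst h
      simp only [Function.update_self]
      exact replaceBead_comm _ _ _ _ _ (h1 rfl) (h2 rfl)
    · simp [Function.update_of_ne h]
  · funext k
    by_cases hA : k = k₁ <;> by_cases hB : k = k₂ <;>
      simp [Function.update_apply, hA, hB, hk, Ne.symm hk]

lemma move_image {e : ℕ} {f : ℤ → ℤ} (hf : Function.Injective f)
    (hadd : ∀ b N : ℤ, (e : ℤ) ∣ N → f (b + N) = f b + N)
    {B B' : ι → Set ℤ} (h : Move1 (e : ℤ) B B' ∨ Move2 (e : ℤ) B B') :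
    Move1 (e : ℤ) (fun k => f '' B k) (fun k => f '' B' k) ∨
      Move2 (e : ℤ) (fun k => f '' B k) (fun k => f '' B' k) := by
  rcases h with ⟨k₁, k₂, b₁, b₂, hb₁, hb₁', hb₂, hb₂', rfl⟩ |
    ⟨k₁, k₂, b₁, b₂, h, hpos, hdvd, hb₁, hb₁', hb₂, hb₂', rfl⟩
  · left
    have hsub : ∀ b : ℤ, f (b - (e : ℤ)) = f b - (e : ℤ) := fun b => by
      have h := hadd b (-(e : ℤ)) ⟨-1, by ring⟩
      rw [sub_eq_add_neg, h, sub_eq_add_neg]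
    have haddE : ∀ b : ℤ, f (b + (e : ℤ)) = f b + (e : ℤ) := fun b =>
      hadd b _ ⟨1, (mul_one _).symm⟩
    refine ⟨k₁, k₂, f b₁, f b₂, ⟨b₁, hb₁, rfl⟩, ?_, ⟨b₂, hb₂, rfl⟩, ?_, ?_⟩
    · rw [← hsub]
      exact fun hx => hb₁' ((hf.mem_set_image).mp hx)
    · rw [← haddE]
      exact fun hx => hb₂' ((hf.mem_set_image).mp hx)
    · rw [image_twoBeadUpdate hf, hsub, haddE]
  · right
    -- h' := f (b₁ + h) - f b₁
    set h' : ℤ := f (b₁ + h) - f b₁ with hh'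
    have hdiff : f b₁ = f b₂ + (b₁ - b₂) := by
      have := hadd b₂ (b₁ - b₂) hdvd
      rw [add_sub_cancel] at this
      exact this
    have hdiff2 : f (b₁ + h) = f (b₂ + h) + (b₁ - b₂) := by
      have := hadd (b₂ + h) (b₁ - b₂) hdvd
      rw [show b₂ + h + (b₁ - b₂) = b₁ + h by ring] at this
      exact this
    have hsame : f (b₂ + h) = f b₂ + h' := by
      rw [hh', hdiff, hdiff2]; ring
    have hne : h' ≠ 0 := by
      intro h0
      have : f (b₁ + h) = f b₁ := by omega
      have := hf this
      omega
    have hdvd' : (e : ℤ) ∣ f b₁ - f b₂ := by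
      rw [hdiff, add_sub_cancel_left]; exact hdvd
    rcases lt_or_gt_of_ne hne with hneg | hposi
    · -- h' < 0 : roles of the two beads are swapped
      refine ⟨k₂, k₁, f (b₂ + h), f (b₁ + h), -h', by omega, ?_, ⟨b₂ + h, hb₂', rfl⟩, ?_, ?_, ?_, ?_⟩
      · rw [show f (b₂ + h) - f (b₁ + h) = -(f b₁ - f b₂) by rw [hsame, hh']; ring]
        exact Dvd.dvd.neg_right hdvd'
      · rw [show f (b₂ + h) + -h' = f b₂ by rw [hsame]; ring]
        exact fun hx => hb₂ ((hf.mem_set_image).mp hx)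
      · exact fun hx => hb₁' ((hf.mem_set_image).mp hx)
      · rw [show f (b₁ + h) + -h' = f b₁ by rw [hh']; ring]
        exact ⟨b₁, hb₁, rfl⟩
      · rw [image_twoBeadUpdate hf]
        rw [show f (b₂ + h) + -h' = f b₂ by rw [hsame]; ring,
          show f (b₁ + h) + -h' = f b₁ by rw [hh']; ring]
        refine twoBeadUpdate_comm _ _ _ _ _ _ _ (fun hk => ?_) (fun hk => ?_)
        · intro hx
          have hb : b₁ = b₂ := by have := hf hx; omega
          exact hb₂ (by rw [← hk, ← hb]; exact hb₁)
        · intro hx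
          have hb : b₂ = b₁ := hf hx
          exact hb₂ (by rw [← hk, hb]; exact hb₁)
    · refine ⟨k₁, k₂, f b₁, f b₂, h', hposi, hdvd', ⟨b₁, hb₁, rfl⟩, ?_, ?_, ?_, ?_⟩
      · rw [show f b₁ + h' = f (b₁ + h) by rw [hh']; ring]
        exact fun hx => hb₁' ((hf.mem_set_image).mp hx)
      · exact fun hx => hb₂ ((hf.mem_set_image).mp hx)
      · rw [show f b₂ + h' = f (b₂ + h) by rw [hsame]]
        exact ⟨b₂ + h, hb₂', rfl⟩
      · rw [image_twoBeadUpdate hf]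
        rw [show f b₁ + h' = f (b₁ + h) by rw [hh']; ring,
          show f b₂ + h' = f (b₂ + h) by rw [hsame]]

lemma blockEq_image {e : ℕ} {f : ℤ → ℤ} (hf : Function.Injective f)
    (hadd : ∀ b N : ℤ, (e : ℤ) ∣ N → f (b + N) = f b + N)
    {B B' : ι → Set ℤ} (h : BlockEq (e : ℤ) B B') :
    BlockEq (e : ℤ) (fun k => f '' B k) (fun k => f '' B' k) := by
  unfold BlockEq at h ⊢
  exact Relation.ReflTransGen.lift (r := fun X Y => Move1 (e : ℤ) X Y ∨ Move2 (e : ℤ) X Y)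
    (p := fun X Y => Move1 (e : ℤ) X Y ∨ Move2 (e : ℤ) X Y)
    (fun X => fun k => f '' X k) (fun _ _ hxy => move_image hf hadd hxy) _ _ h

end StretchAux

theorem stmt14 (e r : ℕ) (he : 2 ≤ e) (hr : 1 ≤ r) (M : ℕ → ℤ)
    (lam mu : Fin r → PartitionSeq) (s s' : Fin r → ℤ) :
    BlockEq (e : ℤ) (fun k => betaSet (lam k) (s k)) (fun k => betaSet (mu k) (s' k)) ↔
      BlockEq (e : ℤ) (fun k => strSet e M (betaSet (lam k) (s k)))
        (fun k => strSet e M (betaSet (mu k) (s' k))) := by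
  have he0 : 0 < e := by omega
  have hfe1 : (fun k : Fin r => strSet e M (betaSet (lam k) (s k))) =
      fun k => strFun e M '' betaSet (lam k) (s k) :=
    funext fun k => strSet_eq_image e he0 M _
  have hfe2 : (fun k : Fin r => strSet e M (betaSet (mu k) (s' k))) =
      fun k => strFun e M '' betaSet (mu k) (s' k) :=
    funext fun k => strSet_eq_image e he0 M _
  rw [hfe1, hfe2]
  constructor
  · intro hB
    exact blockEq_image (strFun_injective e M) (strFun_add e M) hB
  · intro hB
    have h2 := blockEq_image (strFun_injective e (fun i => -M i))
      (strFun_add e (fun i => -M i)) hB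
    have hid : ∀ B : Set ℤ, strFun e (fun i => -M i) '' (strFun e M '' B) = B := by
      intro B
      rw [Set.image_image]
      simp only [strFun_inv, Set.image_id']
    have hl : (fun k : Fin r => strFun e (fun i => -M i) ''
        ((fun k => strFun e M '' betaSet (lam k) (s k)) k)) =
        fun k => betaSet (lam k) (s k) := funext fun k => hid _
    have hm : (fun k : Fin r => strFun e (fun i => -M i) ''
        ((fun k => strFun e M '' betaSet (mu k) (s' k)) k)) =
        fun k => betaSet (mu k) (s' k) := funext fun k => hid _
    rw [hl, hm] at h2
    exact h2
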